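/- Let N be a finite-dimensional commutative nilpotent algebra over F (char 0), π a projection on N with range in the annihilator Ann(N), ρ := (id + π)/2, and f := π ∘ exp₁ where exp₁(x) = Σ_{k≥1} x^k/k!. For a ∈ N_{[3]} = {x : xN³ = 0} with f(a) = 0, define h_a(x) := x − ρ(a x) + a. Then h_a is an invertible affine map of N satisfying f ∘ h_a = f. -/

import Mathlib

/-- `pw F N k` is the characteristic ideal `N^k`. -/
def pw (F N : Type*) [Field F] [NonUnitalNonAssocRing N] [Module F N] : ℕ → Submodule F N
  | 0 => ⊤
  | 1 => ⊤
  | (k+2) => Submodule.span F {z : N | ∃ x : N, ∃ y ∈ pw F N (k+1), z = x * y}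

/-- The annihilator `Ann(N) = {x | x·N = 0}` of a commutative algebra `N`. -/
def annSub (F N : Type*) [Field F] [NonUnitalCommRing N] [Module F N]
    [SMulCommClass F N N] [IsScalarTower F N N] : Submodule F N where
  carrier := {x | ∀ y : N, x * y = 0}
  add_mem' := by intro a b ha hb y; simp [add_mul, ha y, hb y]
  zero_mem' := by intro y; simp
  smul_mem' := by intro c x hx y; rw [smul_mul_assoc, hx y, smul_zero]

/-- `npw x k = x^(k+1)` in a non-unital ring. -/
def npw {N : Type*} [Mul N] (x : N) : ℕ → N
  | 0 => x
  | (k+1) => x * npw x k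

/-- The truncated exponential `exp₁ x = Σ_{k=1}^{m} x^k/k!` (truncation level `m`,
a faithful rendering of `exp₁` on an algebra with `N^{m+1} = 0`). -/
noncomputable def exp1 (F : Type*) {N : Type*} [Field F] [NonUnitalNonAssocRing N]
    [Module F N] (m : ℕ) (x : N) : N :=
  ∑ k ∈ Finset.range m, ((Nat.factorial (k + 1) : F))⁻¹ • npw x k

section Aux
set_option linter.unusedSectionVars false
variable {F N : Type*} [Field F] [NonUnitalCommRing N] [Module F N]
  [SMulCommClass F N N] [IsScalarTower F N N]

lemma mul_mem_pw (x : N) {k : ℕ} {y : N} (hy : y ∈ pw F N (k+1)) :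
    x * y ∈ pw F N (k+2) :=
  Submodule.subset_span ⟨x, y, hy, rfl⟩

lemma pw_step (m : ℕ) : pw F N (m+1) ≤ pw F N m := by
  induction m with
  | zero => simp [pw]
  | succ k ih =>
    cases k with
    | zero => simp [pw]
    | succ k =>
      refine Submodule.span_le.2 ?_
      rintro z ⟨x, y, hy, rfl⟩
      exact mul_mem_pw x (ih hy)

lemma pw_le_of_le {m n : ℕ} (h : n ≤ m) : pw F N m ≤ pw F N n := by
  induction h with
  | refl => exact le_rfl
  | step h ih => exact le_trans (pw_step _) ih

lemma npw_mem (x : N) (k : ℕ) : npw x k ∈ pw F N (k+1) := by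
  induction k with
  | zero => simp [pw, npw]
  | succ k ih => exact mul_mem_pw x ih

lemma npw_mul_npw_mem (x y : N) (k j : ℕ) : npw x k * npw y j ∈ pw F N (k+j+2) := by
  induction k with
  | zero => rw [show (0:ℕ)+j+2 = j+2 by omega]; exact mul_mem_pw x (npw_mem y j)
  | succ k ih =>
    show (x * npw x k) * npw y j ∈ pw F N (k+1+j+2)
    rw [mul_assoc, show k+1+j+2 = (k+j+1)+2 by omega]
    exact mul_mem_pw x ih

lemma mem_pw_three (x y z : N) : x * (y * z) ∈ pw F N 3 :=
  mul_mem_pw x (Submodule.subset_span ⟨y, z, by simp [pw], rfl⟩)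

lemma inr_npw (x : N) (k : ℕ) :
    ((npw x k : N) : Unitization F N) = (x : Unitization F N)^(k+1) := by
  induction k with
  | zero => simp [npw]
  | succ k ih => rw [npw, Unitization.inr_mul, ih, ← pow_succ']

/-- Truncated exponential with the constant term, in the unitization. -/
noncomputable def truncE (F : Type*) {N : Type*} [Field F] [NonUnitalCommRing N] [Module F N]
    [SMulCommClass F N N] [IsScalarTower F N N] (ν : ℕ) (x : N) : Unitization F N :=
  ∑ k ∈ Finset.range (ν+1), ((Nat.factorial k : F))⁻¹ • (x : Unitization F N)^k

lemma inr_exp1 (ν : ℕ) (x : N) :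
    ((exp1 F ν x : N) : Unitization F N) = truncE F ν x - 1 := by
  rw [truncE, Finset.sum_range_succ']
  simp only [pow_zero, Nat.factorial_zero, Nat.cast_one, inv_one, one_smul, add_sub_cancel_right]
  rw [exp1]
  rw [show ((↑) : N → Unitization F N) = (Unitization.inrNonUnitalAlgHom F N) from rfl,
    map_sum]
  refine Finset.sum_congr rfl fun k _ => ?_
  simp only [map_smul]
  change _ • ((npw x k : N) : Unitization F N) = _ • ((x : N) : Unitization F N) ^ (k + 1)
  rw [inr_npw]

variable {ν : ℕ} (hnil : pw F N (ν+1) = ⊥)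
include hnil

lemma npw_eq_zero {x : N} {k : ℕ} (h : ν ≤ k) : npw x k = 0 := by
  have := pw_le_of_le (show ν+1 ≤ k+1 by omega) (npw_mem (F := F) x k)
  rw [hnil] at this; simpa using this

lemma npw_mul_npw_eq_zero {x y : N} {k j : ℕ} (h : ν ≤ k+j+1) : npw x k * npw y j = 0 := by
  have := pw_le_of_le (show ν+1 ≤ k+j+2 by omega) (npw_mul_npw_mem (F := F) x y k j)
  rw [hnil] at this; simpa using this

lemma pow_mul_pow_eq_zero {x y : N} {i j : ℕ} (h : ν + 1 ≤ i + j) :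
    (x : Unitization F N)^i * (y : Unitization F N)^j = 0 := by
  match i, j with
  | 0, (j+1) =>
    rw [pow_zero, one_mul, ← inr_npw, npw_eq_zero hnil (by omega), Unitization.inr_zero]
  | (i+1), 0 =>
    rw [pow_zero, mul_one, ← inr_npw, npw_eq_zero hnil (by omega), Unitization.inr_zero]
  | (i+1), (j+1) =>
    rw [← inr_npw, ← inr_npw, ← Unitization.inr_mul,
      npw_mul_npw_eq_zero hnil (by omega), Unitization.inr_zero]

end Aux

section Add
set_option linter.unusedSectionVars false
variable {F N : Type*} [Field F] [CharZero F] [NonUnitalCommRing N] [Module F N]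
  [SMulCommClass F N N] [IsScalarTower F N N] {ν : ℕ} (hnil : pw F N (ν+1) = ⊥)
include hnil

lemma truncE_add (x y : N) : truncE F ν (x + y) = truncE F ν x * truncE F ν y := by
  classical
  set X := (x : Unitization F N) with hX
  set Y := (y : Unitization F N) with hY
  set g : ℕ × ℕ → Unitization F N :=
    fun p => ((p.1.factorial : F)⁻¹ * (p.2.factorial : F)⁻¹) • (X^p.1 * Y^p.2) with hg
  have key : ∀ p : ℕ × ℕ, ν + 1 ≤ p.1 + p.2 → g p = 0 := fun p h => by
    rw [hg]; dsimp only; rw [pow_mul_pow_eq_zero hnil h, smul_zero]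
  have step1 : truncE F ν x * truncE F ν y
      = ∑ p ∈ Finset.range (ν+1) ×ˢ Finset.range (ν+1), g p := by
    rw [truncE, truncE, Finset.sum_mul_sum, ← Finset.sum_product']
    exact Finset.sum_congr rfl fun p _ => smul_mul_smul_comm _ _ _ _
  have step2 : truncE F ν (x + y)
      = ∑ q ∈ (Finset.range (ν+1)).sigma (fun k => Finset.range (k+1)), g (q.2, q.1 - q.2) := by
    rw [truncE, Finset.sum_sigma]
    refine Finset.sum_congr rfl fun k _ => ?_
    rw [Unitization.inr_add, ← hX, ← hY, add_pow, Finset.smul_sum]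
    refine Finset.sum_congr rfl fun m hm => ?_
    have hm' : m ≤ k := Nat.lt_succ_iff.mp (Finset.mem_range.mp hm)
    have hfac : ((k.factorial : F))⁻¹ * (k.choose m : F)
        = (m.factorial : F)⁻¹ * ((k - m).factorial : F)⁻¹ := by
      have h0 : ((k.choose m : ℕ) : F) * (m.factorial : F) * ((k-m).factorial : F)
          = (k.factorial : F) := by
        exact_mod_cast congrArg (Nat.cast : ℕ → F) (Nat.choose_mul_factorial_mul_factorial hm')
      have h1 : (m.factorial : F) ≠ 0 := Nat.cast_ne_zero.2 (Nat.factorial_ne_zero m)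
      have h2 : ((k-m).factorial : F) ≠ 0 := Nat.cast_ne_zero.2 (Nat.factorial_ne_zero _)
      have h3 : (k.factorial : F) ≠ 0 := Nat.cast_ne_zero.2 (Nat.factorial_ne_zero k)
      field_simp
      linear_combination h0
    rw [hg]; dsimp only
    rw [mul_comm (X^m * Y^(k-m)) ((k.choose m : Unitization F N)), ← nsmul_eq_mul,
      ← Nat.cast_smul_eq_nsmul F, smul_smul, hfac]
  have step3 : ∑ q ∈ (Finset.range (ν+1)).sigma (fun k => Finset.range (k+1)), g (q.2, q.1 - q.2)
      = ∑ p ∈ (Finset.range (ν+1) ×ˢ Finset.range (ν+1)).filter (fun p => p.1 + p.2 ≤ ν), g p := by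
    refine Finset.sum_nbij' (fun q => (q.2, q.1 - q.2)) (fun p => ⟨p.1 + p.2, p.1⟩) ?_ ?_ ?_ ?_ ?_
    · rintro ⟨k, m⟩ hq
      simp only [Finset.mem_sigma, Finset.mem_range] at hq
      simp only [Finset.mem_filter, Finset.mem_product, Finset.mem_range]
      omega
    · rintro ⟨i, j⟩ hp
      simp only [Finset.mem_filter, Finset.mem_product, Finset.mem_range] at hp
      simp only [Finset.mem_sigma, Finset.mem_range]
      omega
    · rintro ⟨k, m⟩ hq
      simp only [Finset.mem_sigma, Finset.mem_range] at hq
      simp only [show m + (k - m) = k from by omega]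
    · rintro ⟨i, j⟩ hp
      simp only [Finset.mem_filter, Finset.mem_product, Finset.mem_range] at hp
      simp only [Prod.mk.injEq, true_and]
      omega
    · intro q _
      rfl
  have step4 : ∑ p ∈ (Finset.range (ν+1) ×ˢ Finset.range (ν+1)).filter (fun p => p.1 + p.2 ≤ ν), g p
      = ∑ p ∈ Finset.range (ν+1) ×ˢ Finset.range (ν+1), g p := by
    refine Finset.sum_filter_of_ne fun p _ hne => ?_
    by_contra h
    exact hne (key p (by omega))
  rw [step2, step3, step4, step1]

/-- The addition theorem for `exp1` on a nilpotent algebra. -/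
lemma exp1_add (x y : N) :
    exp1 F ν (x + y) = exp1 F ν x + exp1 F ν y + exp1 F ν x * exp1 F ν y := by
  apply Unitization.inr_injective (R := F)
  rw [show ((↑) : N → Unitization F N) = (Unitization.inrNonUnitalAlgHom F N) from rfl]
  simp only [map_add, map_mul]
  rw [show ((Unitization.inrNonUnitalAlgHom F N) : N → Unitization F N)
      = ((↑) : N → Unitization F N) from rfl]
  rw [inr_exp1, inr_exp1, inr_exp1, truncE_add hnil]
  ring

end Add
section Aux2
set_option linter.unusedSectionVars false
variable {F N : Type*} [Field F] [CharZero F] [NonUnitalCommRing N] [Module F N]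
  [SMulCommClass F N N] [IsScalarTower F N N]

lemma mem_pw_two (x y : N) : x * y ∈ pw F N 2 :=
  Submodule.subset_span ⟨x, y, by simp [pw], rfl⟩

lemma exp1_succ (μ : ℕ) (u : N) :
    exp1 F (μ+1) u
      = (∑ k ∈ Finset.range μ, ((Nat.factorial (k+2) : F))⁻¹ • (u * npw u k)) + u := by
  rw [exp1, Finset.sum_range_succ']
  simp [npw]

lemma exp1_two (μ : ℕ) (u : N) :
    exp1 F (μ+2) u
      = (∑ k ∈ Finset.range μ, ((Nat.factorial (k+3) : F))⁻¹ • (u * (u * npw u k)))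
        + (2:F)⁻¹ • (u * u) + u := by
  rw [exp1, Finset.sum_range_succ', Finset.sum_range_succ']
  have h2 : ((Nat.factorial (0+1+1) : F))⁻¹ = (2:F)⁻¹ := by norm_num [Nat.factorial]
  simp only [npw, h2]
  have h1 : ((Nat.factorial (0+1) : F))⁻¹ • u = u := by norm_num [Nat.factorial]
  rw [h1]

lemma exp1_sq_zero {μ : ℕ} {w : N} (hw : w * w = 0) : exp1 F (μ+1) w = w := by
  rw [exp1_succ]
  have hz : ∀ k, w * npw w k = 0 := by
    intro k
    induction k with
    | zero => exact hw
    | succ k ih => rw [npw, ← mul_assoc, hw, zero_mul]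
  simp [hz]

end Aux2

/-- With `N` commutative nilpotent (nil-index `ν`), `π` a projection with range
in `Ann(N)`, `ρ = (id + π)/2`, `f = π ∘ exp₁`, and `a ∈ N_{[3]}` with `f(a) = 0`, the map
`h_a(x) = x − ρ(a·x) + a` is an invertible affine map of `N` with `f ∘ h_a = f`. -/
theorem stmt6 {F N : Type*} [Field F] [CharZero F] [NonUnitalCommRing N] [Module F N]
    [SMulCommClass F N N] [IsScalarTower F N N] [FiniteDimensional F N]
    (ν : ℕ) (hnil : pw F N (ν + 1) = ⊥)
    (π : N →ₗ[F] N) (hproj : π ∘ₗ π = π) (hrange : LinearMap.range π ≤ annSub F N)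
    (a : N) (ha : ∀ y ∈ pw F N 3, a * y = 0) (haS : π (exp1 F ν a) = 0) :
    Function.Bijective (fun x : N => x - (2 : F)⁻¹ • (a * x + π (a * x)) + a) ∧
      ∀ x : N, π (exp1 F ν (x - (2 : F)⁻¹ • (a * x + π (a * x)) + a)) = π (exp1 F ν x) := by
  have hann : ∀ z y : N, π z * y = 0 := fun z y =>
    hrange (LinearMap.mem_range_self π z) y
  have hann' : ∀ z y : N, y * π z = 0 := fun z y => by rw [mul_comm]; exact hann z y
  have hπ2 : ∀ z : N, π (π z) = π z := fun z => DFunLike.congr_fun hproj z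
  have L0 : ∀ y z w : N, a * (y * (z * w)) = 0 := fun y z w => ha _ (mem_pw_three y z w)
  have L1 : ∀ u v w : N, (u * v) * (a * w) = 0 := fun u v w => by
    rw [mul_comm (u*v) (a*w), mul_assoc]; exact L0 w u v
  have V2 : ∀ u w : N, u * (a * (a * w)) = 0 := fun u w => by
    rw [mul_left_comm]; exact L0 u a w
  -- the homotopy operator
  set T : N → N := fun u => (2:F)⁻¹ • (a * u + π (a * u)) with hT
  have hTsub : ∀ u v, T (u - v) = T u - T v := fun u v => by
    simp only [hT, mul_sub, map_sub, sub_add_sub_comm, smul_sub]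
  have hTadd : ∀ u v, T (u + v) = T u + T v := fun u v => by
    simp only [hT, mul_add, map_add, add_add_add_comm, smul_add]
  have haT : ∀ u, a * T u = (2:F)⁻¹ • (a * (a * u)) := fun u => by
    simp only [hT, mul_smul_comm, mul_add, hann' (a*u) a, add_zero]
  have haTT : ∀ u, a * T (T u) = 0 := fun u => by
    rw [haT (T u), haT u, mul_smul_comm, L0 a a u, smul_zero, smul_zero]
  have hT3 : ∀ u, T (T (T u)) = 0 := fun u => by
    rw [show T (T (T u)) = (2:F)⁻¹ • (a * T (T u) + π (a * T (T u))) from rfl,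
      haTT, map_zero, add_zero, smul_zero]
  constructor
  · -- bijectivity
    refine Function.bijective_iff_has_inverse.mpr
      ⟨fun y => (y - a) + T (y - a) + T (T (y - a)), fun x => ?_, fun y => ?_⟩
    · show (x - T x + a - a) + T (x - T x + a - a) + T (T (x - T x + a - a)) = x
      rw [add_sub_cancel_right, hTsub, hTsub, hT3, sub_zero]
      abel
    · show (y - a) + T (y - a) + T (T (y - a)) - T ((y - a) + T (y - a) + T (T (y - a))) + a = y
      rw [hTadd, hTadd, hT3, add_zero]
      abel
  · -- the exponential identity
    intro x
    show π (exp1 F ν (x - T x + a)) = π (exp1 F ν x)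
    match ν, hnil, haS with
    | 0, hnil, haS => simp [exp1]
    | 1, hnil, haS =>
      have hprod : ∀ u v : N, u * v = 0 := fun u v => by
        have h := hnil ▸ mem_pw_two (F := F) u v
        simpa using h
      have he1 : ∀ u : N, exp1 F 1 u = u := fun u => by
        simp [exp1, npw, Nat.factorial]
      have hTx0 : T x = 0 := by
        show (2:F)⁻¹ • (a * x + π (a * x)) = 0
        rw [hprod a x, map_zero, add_zero, smul_zero]
      rw [he1] at haS
      rw [he1, he1, hTx0, sub_zero, map_add, haS, add_zero]
    | (μ+2), hnil, haS =>
      set c : F := (2:F)⁻¹ with hc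
      set E := exp1 F (μ+2) x with hE
      set A := exp1 F (μ+2) a with hA
      -- P1 : exp1 u * (a * w) = u * (a * w)
      have P1 : ∀ u w : N, exp1 F (μ+2) u * (a * w) = u * (a * w) := by
        intro u w
        rw [show (μ+2) = (μ+1)+1 from rfl, exp1_succ, add_mul, Finset.sum_mul]
        rw [Finset.sum_eq_zero, zero_add]
        intro k _
        rw [smul_mul_assoc, L1 u (npw u k) w, smul_zero]
      have htt : (a*x + π (a*x)) * (a*x + π (a*x)) = 0 := by
        rw [add_mul, mul_add, mul_add, L1 a x x, hann' (a*x) (a*x), hann (a*x) (a*x),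
          hann (a*x) (π (a*x))]
        simp
      have hTx : T x = c • (a*x + π (a*x)) := rfl
      have hTsq : T x * T x = 0 := by
        rw [hTx, smul_mul_smul_comm, htt, smul_zero]
      have hnegt : exp1 F (μ+2) (-(T x)) = -(T x) := by
        rw [show (μ+2) = (μ+1)+1 from rfl]
        exact exp1_sq_zero (by rw [neg_mul_neg, hTsq])
      have hAt : A * T x = c • (a * (a * x)) := by
        rw [hTx, mul_smul_comm, mul_add, hann' (a*x) A, add_zero, hA, P1 a x]
      have hEt : E * T x = c • (a * (x * x)) := by
        rw [hTx, mul_smul_comm, mul_add, hann' (a*x) E, add_zero, hE, P1 x x]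
        rw [show x * (a * x) = a * (x * x) by rw [mul_left_comm]]
      have hEc : E * (a * (a * x)) = 0 := by
        rw [hE, P1 x (a*x), V2]
      have hEA : E * A = x*a + c • (a * (a * x)) + c • (a * (x * x)) := by
        rw [hE, hA, exp1_two, exp1_two]
        set Sx := ∑ k ∈ Finset.range μ, ((Nat.factorial (k+3) : F))⁻¹ • (x * (x * npw x k))
          with hSx
        set Sa := ∑ k ∈ Finset.range μ, ((Nat.factorial (k+3) : F))⁻¹ • (a * (a * npw a k))
          with hSa
        have z1 : ∀ w : N, Sx * (a * w) = 0 := fun w => by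
          rw [hSx, Finset.sum_mul]
          exact Finset.sum_eq_zero fun k _ => by
            rw [smul_mul_assoc, L1 x (x * npw x k) w, smul_zero]
        have z2 : ∀ w : N, w * Sa = 0 := fun w => by
          rw [hSa, Finset.mul_sum]
          exact Finset.sum_eq_zero fun k _ => by
            rw [mul_smul_comm, V2 w (npw a k), smul_zero]
        have z3 : Sx * a = 0 := by
          rw [hSx, Finset.sum_mul]
          exact Finset.sum_eq_zero fun k _ => by
            rw [smul_mul_assoc, mul_comm, L0 x x (npw x k), smul_zero]
        rw [add_mul, add_mul, mul_add, mul_add, mul_add, mul_add, mul_add, mul_add]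
        simp only [smul_mul_assoc, mul_smul_comm, z1 a, z2, z3, L1 x x a, smul_zero,
          zero_add, add_zero]
        rw [show x * x * a = a * (x * x) from mul_comm _ _,
          show x * (a * a) = a * (a * x) by rw [mul_comm, mul_assoc], hc]
        abel
      -- assemble
      have hB : exp1 F (μ+2) (a + -(T x)) = A - T x - c • (a * (a * x)) := by
        rw [exp1_add hnil a (-(T x)), hnegt, ← hA, mul_neg, hAt]
        abel
      have hEB : E * (A - T x - c • (a * (a * x)))
          = x * a + c • (a * (a * x)) := by
        rw [mul_sub, mul_sub, hEA, hEt, mul_smul_comm, hEc, smul_zero, sub_zero]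
        abel
      have hmain : exp1 F (μ+2) (x - T x + a) = E + A + x*a - T x := by
        rw [show x - T x + a = x + (a + -(T x)) by abel]
        rw [exp1_add hnil x (a + -(T x)), hB, ← hE, hEB]
        abel
      rw [hmain]
      have hπt : π (T x) = π (a * x) := by
        rw [hTx, map_smul, map_add, hπ2, ← two_smul F, smul_smul, hc,
          inv_mul_cancel₀ (two_ne_zero), one_smul]
      rw [map_sub, map_add, map_add]
      rw [haS, hπt, show π (x * a) = π (a * x) by rw [mul_comm], add_zero]
      abel
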